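/- Consider the complete k-ary tree T with ℓ levels of nodes and m = |nodes(T)| total nodes. Let x : leaves(T) → ℝ be leaf counts, H(x)[v] = Σ_{u ∈ leaves(v)} x[u], and h̃ = H(x) + η, where the coordinates of η are independent with mean zero and common variance σ² > 0. Let h̄ be the minimum L2 consistent solution for h̃, and for a range query q given by a set R of leaves with true answer q(x) = Σ_{u ∈ R} x[u], let h̄_q = Σ_{u ∈ R} h̄[u]. Then for every vector a ∈ ℝ^m such that the linear estimator a·h̃ is unbiased for q (i.e., Σ_v a[v]·H(x)[v] = q(x) for all x ∈ ℝ^{leaves}), the mean squared error satisfies E[(h̄_q − q(x))²] ≤ E[(a·h̃ − q(x))²]. That is, h̄_q has minimum error among all linear unbiased estimators of the range query q. -/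

import Mathlib

open MeasureTheory

/-- A node of the complete `k`-ary tree with `ℓ` levels of nodes. -/
abbrev TreeNode (k ℓ : ℕ) : Type := Σ d : Fin ℓ, Fin (k ^ (d : ℕ))

/-- The node at depth `d` with index `j`. -/
def mkNode {k ℓ : ℕ} (d : ℕ) (hd : d < ℓ) (j : Fin (k ^ d)) : TreeNode k ℓ := ⟨⟨d, hd⟩, j⟩

/-- The `r`-th child of the node at depth `d` with index `j`. -/
def childNode {k ℓ : ℕ} (d : ℕ) (hd : d + 1 < ℓ) (j : Fin (k ^ d)) (r : Fin k) :
    TreeNode k ℓ :=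
  ⟨⟨d + 1, hd⟩, ⟨(j : ℕ) * k + (r : ℕ), by
    have hj := j.isLt
    have hr := r.isLt
    calc (j : ℕ) * k + (r : ℕ) < ((j : ℕ) + 1) * k := by nlinarith
      _ ≤ k ^ d * k := Nat.mul_le_mul_right _ (by omega)
      _ = k ^ (d + 1) := (pow_succ k d).symm⟩⟩

/-- A node-value vector is consistent if every internal node's value equals the sum of
its children's values. -/
def Consistent {k ℓ : ℕ} (t : TreeNode k ℓ → ℝ) : Prop :=
  ∀ (d : ℕ) (hd : d + 1 < ℓ) (j : Fin (k ^ d)),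
    t (mkNode d (by omega) j) = ∑ r : Fin k, t (childNode d hd j r)

/-- The leaves of the subtree rooted at `v`. -/
def subtreeLeaves {k ℓ : ℕ} (v : TreeNode k ℓ) : Finset (Fin (k ^ (ℓ - 1))) :=
  Finset.univ.filter fun u => (u : ℕ) / k ^ (ℓ - 1 - (v.1 : ℕ)) = (v.2 : ℕ)

/-- The consistent node counts induced by leaf counts `x`: `H(x)[v] = Σ_{u ∈ leaves(v)} x[u]`. -/
noncomputable def Hfun {k ℓ : ℕ} (x : Fin (k ^ (ℓ - 1)) → ℝ) (v : TreeNode k ℓ) : ℝ :=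
  ∑ u ∈ subtreeLeaves v, x u

section Aux
variable {k ℓ : ℕ}

lemma consistent_add_smul {s t : TreeNode k ℓ → ℝ} (ht : Consistent t) (hs : Consistent s)
    (τ : ℝ) : Consistent (fun v => t v + τ * s v) := by
  intro d hd j
  simp only
  rw [ht d hd j, hs d hd j, Finset.mul_sum, ← Finset.sum_add_distrib]

lemma subtreeLeaves_leaf (hℓ : 1 ≤ ℓ) (h : ℓ - 1 < ℓ) (u : Fin (k ^ (ℓ - 1))) :
    subtreeLeaves (mkNode (ℓ - 1) h u) = {u} := by
  ext w
  simp [subtreeLeaves, mkNode, Nat.sub_self, Fin.val_eq_val]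

lemma Hfun_leaf (hℓ : 1 ≤ ℓ) (h : ℓ - 1 < ℓ) (y : Fin (k ^ (ℓ - 1)) → ℝ)
    (u : Fin (k ^ (ℓ - 1))) : Hfun y (mkNode (ℓ - 1) h u) = y u := by
  rw [Hfun, subtreeLeaves_leaf hℓ h u, Finset.sum_singleton]

lemma div_pow_succ_iff {k : ℕ} (hk : 0 < k) (u e j : ℕ) :
    u / k ^ (e + 1) = j ↔ ∃ r, r < k ∧ u / k ^ e = j * k + r := by
  constructor
  · intro h
    have hq : u / k ^ e / k = j := by
      rw [Nat.div_div_eq_div_mul, ← pow_succ]; exact h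
    refine ⟨u / k ^ e % k, Nat.mod_lt _ hk, ?_⟩
    calc u / k ^ e = k * (u / k ^ e / k) + u / k ^ e % k := (Nat.div_add_mod _ _).symm
      _ = j * k + u / k ^ e % k := by rw [hq, Nat.mul_comm]
  · rintro ⟨r, hr, h⟩
    rw [pow_succ, ← Nat.div_div_eq_div_mul, h, Nat.mul_comm j k, Nat.mul_add_div hk,
      Nat.div_eq_of_lt hr, Nat.add_zero]

lemma Hfun_consistent (hk : 2 ≤ k) (y : Fin (k ^ (ℓ - 1)) → ℝ) :
    Consistent (Hfun (k := k) (ℓ := ℓ) y) := by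
  intro d hd j
  have hk0 : 0 < k := by omega
  have he1 : ℓ - 1 - d = (ℓ - 1 - (d + 1)) + 1 := by omega
  have hsplit : subtreeLeaves (mkNode d (by omega) j)
      = Finset.univ.biUnion (fun r : Fin k => subtreeLeaves (childNode d hd j r)) := by
    ext u
    simp only [subtreeLeaves, Finset.mem_biUnion, Finset.mem_filter,
      Finset.mem_univ, true_and]
    simp only [mkNode, childNode, Fin.val_mk]
    rw [he1, div_pow_succ_iff hk0]
    constructor
    · rintro ⟨r, hr, h⟩
      exact ⟨⟨r, hr⟩, h⟩
    · rintro ⟨r, h⟩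
      exact ⟨(r : ℕ), r.isLt, h⟩
  have hdisj : ∀ r₁ ∈ (Finset.univ : Finset (Fin k)), ∀ r₂ ∈ Finset.univ, r₁ ≠ r₂ →
      Disjoint (subtreeLeaves (childNode d hd j r₁)) (subtreeLeaves (childNode d hd j r₂)) := by
    intro r₁ _ r₂ _ hne
    rw [Finset.disjoint_left]
    intro u hu1 hu2
    simp only [subtreeLeaves, Finset.mem_filter] at hu1 hu2
    simp only [childNode, Fin.val_mk] at hu1 hu2
    apply hne
    have h12 : (j : ℕ) * k + (r₁ : ℕ) = (j : ℕ) * k + (r₂ : ℕ) := by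
      rw [← hu1.2, ← hu2.2]
    exact Fin.ext (Nat.add_left_cancel h12)
  rw [Hfun, hsplit, Finset.sum_biUnion hdisj]
  rfl

lemma consistent_eq_Hfun (hk : 2 ≤ k) (hℓ : 1 ≤ ℓ) {t : TreeNode k ℓ → ℝ}
    (ht : Consistent t) (hlt : ℓ - 1 < ℓ) (v : TreeNode k ℓ) :
    t v = Hfun (fun u => t (mkNode (ℓ - 1) hlt u)) v := by
  set y : Fin (k ^ (ℓ - 1)) → ℝ := fun u => t (mkNode (ℓ - 1) hlt u) with hy
  have main : ∀ m (d : ℕ) (hd : d < ℓ) (j : Fin (k ^ d)), ℓ - 1 - d ≤ m →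
      t (mkNode d hd j) = Hfun y (mkNode d hd j) := by
    intro m
    induction m with
    | zero =>
      intro d hd j h0
      have hd1 : d = ℓ - 1 := by omega
      subst hd1
      rw [Hfun_leaf hℓ hd y j]
    | succ m ih =>
      intro d hd j h0
      rcases le_or_gt (ℓ - 1 - d) m with h' | h'
      · exact ih d hd j h'
      · have hd1 : d + 1 < ℓ := by omega
        have e1 : t (mkNode d hd j) = ∑ r : Fin k, t (childNode d hd1 j r) := ht d hd1 j
        have e2 : Hfun y (mkNode d hd j) = ∑ r : Fin k, Hfun y (childNode d hd1 j r) :=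
          Hfun_consistent hk y d hd1 j
        rw [e1, e2]
        refine Finset.sum_congr rfl fun r _ => ?_
        exact ih (d + 1) hd1 _ (by omega)
  obtain ⟨⟨d, hd⟩, j⟩ := v
  exact main ℓ d hd j (by omega)

end Aux


lemma key_zero (A B : ℝ) (hB : 0 ≤ B) (h : ∀ τ : ℝ, 0 ≤ 2 * τ * A + τ ^ 2 * B) : A = 0 := by
  by_contra hA
  have hB1 : (0:ℝ) < B + 1 := by linarith
  have h1 := h (-(A / (B + 1)))
  have key : 2 * (-(A / (B+1))) * A + (-(A / (B+1))) ^ 2 * B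
      = -(A ^ 2 * (B + 2) / (B + 1) ^ 2) := by
    field_simp
    ring
  rw [key] at h1
  have hpos : 0 < A ^ 2 * (B + 2) / (B + 1) ^ 2 := by positivity
  linarith

section Proj
variable {k ℓ : ℕ}

lemma sum_sub_mul {α : Type*} [Fintype α] (A B t : α → ℝ) :
    ∑ v, (A v - B v) * t v = ∑ v, A v * t v - ∑ v, B v * t v := by
  rw [← Finset.sum_sub_distrib]
  exact Finset.sum_congr rfl fun v _ => by ring

lemma hbar_fix (hbar : (TreeNode k ℓ → ℝ) → TreeNode k ℓ → ℝ)
    (hbar_min : ∀ g t, Consistent t → ∑ v, (hbar g v - g v) ^ 2 ≤ ∑ v, (t v - g v) ^ 2)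
    {t : TreeNode k ℓ → ℝ} (ht : Consistent t) : ∀ v, hbar t v = t v := by
  have h := hbar_min t t ht
  simp only [sub_self, ne_eq, OfNat.ofNat_ne_zero, not_false_eq_true, zero_pow,
    Finset.sum_const_zero] at h
  intro v
  have h2 : ∀ v ∈ (Finset.univ : Finset (TreeNode k ℓ)), (hbar t v - t v) ^ 2 = 0 := by
    intro v _
    have := Finset.sum_nonneg (s := (Finset.univ : Finset (TreeNode k ℓ)))
      (f := fun v => (hbar t v - t v) ^ 2) (fun v _ => sq_nonneg _)
    have h3 := (Finset.sum_eq_zero_iff_of_nonneg (fun v _ => sq_nonneg _)).mp (le_antisymm h this)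
    exact h3 v (Finset.mem_univ v)
  have := h2 v (Finset.mem_univ v)
  have := sq_eq_zero_iff.mp this
  linarith [sub_eq_zero.mp this]

/-- Orthogonality: `hbar g − g` is orthogonal to every consistent vector. -/
lemma hbar_orth (hbar : (TreeNode k ℓ → ℝ) → TreeNode k ℓ → ℝ)
    (hbar_cons : ∀ g, Consistent (hbar g))
    (hbar_min : ∀ g t, Consistent t → ∑ v, (hbar g v - g v) ^ 2 ≤ ∑ v, (t v - g v) ^ 2)
    (g : TreeNode k ℓ → ℝ) {s : TreeNode k ℓ → ℝ} (hs : Consistent s) :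
    ∑ v, (hbar g v - g v) * s v = 0 := by
  set A : ℝ := ∑ v, (hbar g v - g v) * s v with hA
  set B : ℝ := ∑ v, (s v) ^ 2 with hB
  have hBnn : 0 ≤ B := Finset.sum_nonneg fun v _ => sq_nonneg _
  refine key_zero A B hBnn fun τ => ?_
  have hcons : Consistent (fun v => hbar g v + τ * s v) :=
    consistent_add_smul (hbar_cons g) hs τ
  have h := hbar_min g _ hcons
  have hexp : ∑ v, ((fun v => hbar g v + τ * s v) v - g v) ^ 2
      = ∑ v, (hbar g v - g v) ^ 2 + (2 * τ * A + τ ^ 2 * B) := by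
    calc ∑ v, ((fun v => hbar g v + τ * s v) v - g v) ^ 2
        = ∑ v, ((hbar g v - g v) ^ 2
            + (2 * τ * ((hbar g v - g v) * s v) + τ ^ 2 * (s v) ^ 2)) :=
          Finset.sum_congr rfl fun v _ => by ring
      _ = ∑ v, (hbar g v - g v) ^ 2 + (2 * τ * A + τ ^ 2 * B) := by
          rw [Finset.sum_add_distrib, Finset.sum_add_distrib, ← Finset.mul_sum,
            ← Finset.mul_sum, hA, hB]
  rw [hexp] at h
  linarith

end Proj

open ProbabilityTheory in
lemma expected_sq_linear {k ℓ : ℕ} (σ : ℝ) (hσ : 0 < σ)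
    {W : Type*} [MeasurableSpace W] (μ : Measure W) [IsProbabilityMeasure μ]
    (η : W → TreeNode k ℓ → ℝ)
    (hmeas : ∀ v, Measurable fun ω => η ω v)
    (hindep : ProbabilityTheory.iIndepFun (fun v ω => η ω v) μ)
    (hmean : ∀ v, (∫ ω, η ω v ∂μ) = 0)
    (hvar : ∀ v, ProbabilityTheory.variance (fun ω => η ω v) μ = σ ^ 2)
    (w : TreeNode k ℓ → ℝ) :
    ∫ ω, (∑ v, w v * η ω v) ^ 2 ∂μ = (∑ v, (w v) ^ 2) * σ ^ 2 := by
  have hL2 : ∀ v, MemLp (fun ω => η ω v) 2 μ := by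
    intro v
    by_contra h
    have htop : evariance (fun ω => η ω v) μ = ⊤ :=
      evariance_eq_top (hmeas v).aestronglyMeasurable h
    have : variance (fun ω => η ω v) μ = 0 := by
      rw [variance, htop, ENNReal.toReal_top]
    rw [hvar v] at this
    nlinarith
  set X : TreeNode k ℓ → W → ℝ := fun v ω => w v * η ω v with hX
  have hXL2 : ∀ v, MemLp (X v) 2 μ := fun v => (hL2 v).const_mul (w v)
  have hpair : Set.Pairwise ↑(Finset.univ : Finset (TreeNode k ℓ))
      fun i j => IndepFun (X i) (X j) μ := by
    intro i _ j _ hij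
    exact (hindep.indepFun hij).comp (measurable_const_mul (w i)) (measurable_const_mul (w j))
  have hvarsum : variance (∑ v, X v) μ = ∑ v, (w v) ^ 2 * σ ^ 2 := by
    rw [IndepFun.variance_sum (fun v _ => hXL2 v) hpair]
    refine Finset.sum_congr rfl fun v _ => ?_
    rw [hX]
    simp only
    rw [variance_const_mul, hvar v]
  have hsum_eq : (∑ v, X v) = fun ω => ∑ v, w v * η ω v := by
    funext ω
    simp [hX]
  have hmemsum : MemLp (∑ v, X v) 2 μ := memLp_finset_sum' _ fun v _ => hXL2 v
  have hintsum : (∫ ω, (∑ v, X v) ω ∂μ) = 0 := by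
    rw [hsum_eq]
    rw [MeasureTheory.integral_finset_sum _ fun v _ => ((hL2 v).integrable (by norm_num)).const_mul (w v)]
    refine Finset.sum_eq_zero fun v _ => ?_
    rw [MeasureTheory.integral_const_mul, hmean v, mul_zero]
  have hvd := variance_eq_sub hmemsum
  have : (∫ ω, ((∑ v, X v) ω) ^ 2 ∂μ) = ∑ v, (w v) ^ 2 * σ ^ 2 := by
    have hμX : μ[∑ v, X v] = 0 := hintsum
    rw [hvd, hμX] at hvarsum
    simp only [Pi.pow_apply] at hvarsum ⊢
    nlinarith [hvarsum]
  rw [Finset.sum_mul, ← this]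
  congr 1
  funext ω
  rw [hsum_eq]

/-- **Gauss–Markov optimality of constrained inference for range queries.**
Let `h̃ = H(x) + η` where the coordinates of `η` are independent with mean zero and common
variance `σ² > 0`, let `hbar` send each node-value vector to its minimum `L₂` consistent
solution, and let `h̄_q = Σ_{u ∈ R} h̄[u]` answer the range query `q` given by the set of
leaves `R`.  Then for every linear estimator `a·h̃` that is unbiased for `q` (i.e.
`Σ_v a[v]·H(y)[v] = Σ_{u ∈ R} y[u]` for all `y`),
`E[(h̄_q − q(x))²] ≤ E[(a·h̃ − q(x))²]`. -/
theorem tree_inference_gauss_markov_optimal (k ℓ : ℕ) (hk : 2 ≤ k) (hℓ : 1 ≤ ℓ)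
    (σ : ℝ) (hσ : 0 < σ)
    {W : Type*} [MeasurableSpace W] (μ : Measure W) [IsProbabilityMeasure μ]
    (η : W → TreeNode k ℓ → ℝ)
    (hmeas : ∀ v, Measurable fun ω => η ω v)
    (hindep : ProbabilityTheory.iIndepFun (fun v ω => η ω v) μ)
    (hmean : ∀ v, (∫ ω, η ω v ∂μ) = 0)
    (hvar : ∀ v, ProbabilityTheory.variance (fun ω => η ω v) μ = σ ^ 2)
    (x : Fin (k ^ (ℓ - 1)) → ℝ) (R : Finset (Fin (k ^ (ℓ - 1))))
    (hbar : (TreeNode k ℓ → ℝ) → TreeNode k ℓ → ℝ)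
    (hbar_cons : ∀ g, Consistent (hbar g))
    (hbar_min : ∀ g t, Consistent t → ∑ v, (hbar g v - g v) ^ 2 ≤ ∑ v, (t v - g v) ^ 2)
    (a : TreeNode k ℓ → ℝ)
    (hunbiased : ∀ y : Fin (k ^ (ℓ - 1)) → ℝ, ∑ v, a v * Hfun y v = ∑ u ∈ R, y u) :
    (∫ ω, ((∑ u ∈ R, hbar (fun w => Hfun x w + η ω w) (mkNode (ℓ - 1) (by omega) u))
          - ∑ u ∈ R, x u) ^ 2 ∂μ)
      ≤ ∫ ω, ((∑ v, a v * (Hfun x v + η ω v)) - ∑ u ∈ R, x u) ^ 2 ∂μ := by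
  classical
  have hlt : ℓ - 1 < ℓ := by omega
  set leaf : Fin (k ^ (ℓ - 1)) → TreeNode k ℓ := fun u => mkNode (ℓ - 1) hlt u with hleaf
  set c : TreeNode k ℓ → ℝ :=
    fun v => ∑ u ∈ R, (if v = leaf u then (1:ℝ) else 0) with hc
  have ipc : ∀ t : TreeNode k ℓ → ℝ, ∑ v, c v * t v = ∑ u ∈ R, t (leaf u) := by
    intro t
    calc ∑ v, c v * t v
        = ∑ v, ∑ u ∈ R, (if v = leaf u then (1:ℝ) else 0) * t v :=
          Finset.sum_congr rfl fun v _ => by rw [hc]; rw [Finset.sum_mul]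
      _ = ∑ u ∈ R, ∑ v, (if v = leaf u then (1:ℝ) else 0) * t v := Finset.sum_comm
      _ = ∑ u ∈ R, t (leaf u) := Finset.sum_congr rfl fun u _ => by
          simp [ite_mul]
  set b : TreeNode k ℓ → ℝ := hbar c with hb
  have hbcons : Consistent b := hbar_cons c
  -- b is unbiased
  have b_unbiased : ∀ y : Fin (k ^ (ℓ - 1)) → ℝ,
      ∑ v, b v * Hfun y v = ∑ u ∈ R, y u := by
    intro y
    have h1 := hbar_orth hbar hbar_cons hbar_min c (Hfun_consistent hk y)
    rw [sum_sub_mul] at h1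
    have h2 := ipc (Hfun y)
    have h3 : ∑ u ∈ R, Hfun y (leaf u) = ∑ u ∈ R, y u :=
      Finset.sum_congr rfl fun u _ => Hfun_leaf hℓ hlt y u
    rw [hb]
    linarith
  -- the range-query answer from hbar is the linear estimator with coefficients b
  have key1 : ∀ g : TreeNode k ℓ → ℝ,
      ∑ u ∈ R, hbar g (leaf u) = ∑ v, b v * g v := by
    intro g
    have h1 := hbar_orth hbar hbar_cons hbar_min c (hbar_cons g)
    have h2 := hbar_orth hbar hbar_cons hbar_min g hbcons
    rw [sum_sub_mul] at h1 h2
    have h3 := ipc (hbar g)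
    have c1 : ∑ v, hbar c v * hbar g v = ∑ v, hbar g v * b v := by
      rw [hb]; exact Finset.sum_congr rfl fun v _ => mul_comm _ _
    have c2 : ∑ v, g v * b v = ∑ v, b v * g v :=
      Finset.sum_congr rfl fun v _ => mul_comm _ _
    linarith
  -- norm comparison
  have a_ge_b : ∑ v, (b v) ^ 2 ≤ ∑ v, (a v) ^ 2 := by
    set yb : Fin (k ^ (ℓ - 1)) → ℝ := fun u => b (leaf u) with hyb
    have hbH : ∀ v, b v = Hfun yb v := consistent_eq_Hfun hk hℓ hbcons hlt
    have horth : ∑ v, (a v - b v) * b v = 0 := by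
      have h1 : ∑ v, (a v - b v) * b v = ∑ v, (a v - b v) * Hfun yb v :=
        Finset.sum_congr rfl fun v _ => by rw [← hbH v]
      rw [h1, sum_sub_mul, hunbiased yb, b_unbiased yb, sub_self]
    have hexp : ∑ v, (a v) ^ 2
        = ∑ v, (b v) ^ 2 + (∑ v, (a v - b v) ^ 2 + 2 * ∑ v, (a v - b v) * b v) := by
      calc ∑ v, (a v) ^ 2
          = ∑ v, ((b v) ^ 2 + ((a v - b v) ^ 2 + 2 * ((a v - b v) * b v))) :=
            Finset.sum_congr rfl fun v _ => by ring
        _ = _ := by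
            rw [Finset.sum_add_distrib, Finset.sum_add_distrib, ← Finset.mul_sum]
    have hnn : 0 ≤ ∑ v, (a v - b v) ^ 2 := Finset.sum_nonneg fun v _ => sq_nonneg _
    rw [hexp, horth]
    linarith
  -- compute both integrals
  have hbx := b_unbiased x
  have hax := hunbiased x
  have hLHS : (∫ ω, ((∑ u ∈ R, hbar (fun w => Hfun x w + η ω w) (mkNode (ℓ - 1) (by omega) u))
          - ∑ u ∈ R, x u) ^ 2 ∂μ) = (∑ v, (b v) ^ 2) * σ ^ 2 := by
    calc (∫ ω, ((∑ u ∈ R, hbar (fun w => Hfun x w + η ω w) (mkNode (ℓ - 1) (by omega) u))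
          - ∑ u ∈ R, x u) ^ 2 ∂μ)
        = ∫ ω, (∑ v, b v * η ω v) ^ 2 ∂μ := by
          refine integral_congr_ae (Filter.Eventually.of_forall fun ω => ?_)
          show ((∑ u ∈ R, hbar (fun w => Hfun x w + η ω w) (mkNode (ℓ - 1) hlt u))
              - ∑ u ∈ R, x u) ^ 2 = _
          have e1 : (∑ u ∈ R, hbar (fun w => Hfun x w + η ω w) (mkNode (ℓ - 1) hlt u))
              = ∑ v, b v * (Hfun x v + η ω v) := key1 _
          have e2 : ∑ v, b v * (Hfun x v + η ω v)
              = ∑ v, b v * Hfun x v + ∑ v, b v * η ω v := by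
            rw [← Finset.sum_add_distrib]
            exact Finset.sum_congr rfl fun v _ => by ring
          rw [e1, e2, hbx]
          ring
      _ = (∑ v, (b v) ^ 2) * σ ^ 2 :=
          expected_sq_linear σ hσ μ η hmeas hindep hmean hvar b
  have hRHS : (∫ ω, ((∑ v, a v * (Hfun x v + η ω v)) - ∑ u ∈ R, x u) ^ 2 ∂μ)
      = (∑ v, (a v) ^ 2) * σ ^ 2 := by
    calc (∫ ω, ((∑ v, a v * (Hfun x v + η ω v)) - ∑ u ∈ R, x u) ^ 2 ∂μ)
        = ∫ ω, (∑ v, a v * η ω v) ^ 2 ∂μ := by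
          refine integral_congr_ae (Filter.Eventually.of_forall fun ω => ?_)
          have e2 : ∑ v, a v * (Hfun x v + η ω v)
              = ∑ v, a v * Hfun x v + ∑ v, a v * η ω v := by
            rw [← Finset.sum_add_distrib]
            exact Finset.sum_congr rfl fun v _ => by ring
          simp only
          rw [e2, hax]
          ring
      _ = (∑ v, (a v) ^ 2) * σ ^ 2 :=
          expected_sq_linear σ hσ μ η hmeas hindep hmean hvar a
  rw [hLHS, hRHS]
  exact mul_le_mul_of_nonneg_right a_ge_b (sq_nonneg σ)
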